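/- arXiv:1002.0235 — 3 statements merged into one kernel-verified Lean document; each statement's English description precedes it below -/
import Mathlib

section
/- Let T, R be independent random points in ℝ^d with P(‖T − R‖ ≤ ρ) ≤ c_sep ρ^β for all ρ > 0, and let a be an attenuation function with a(ρ) ≤ c_dec ρ^{−α} (α, β, c_sep, c_dec > 0). Then the random variable S = (1/2)·log₂(1 + 2·a(‖T − R‖)) has finite expectation. -/
open MeasureTheory ProbabilityTheory

theorem stmt_3 {Ω : Type*} [MeasurableSpace Ω] (μ : Measure Ω) [IsProbabilityMeasure μ]
    (d : ℕ) (T R : Ω → EuclideanSpace ℝ (Fin d))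
    (hT : Measurable T) (hR : Measurable R)
    (hindep : IndepFun T R μ)
    (csep β cdec α : ℝ) (hcsep : 0 < csep) (hβ : 0 < β) (hcdec : 0 < cdec) (hα : 0 < α)
    (hsep : ∀ ρ > 0, (μ {ω | ‖T ω - R ω‖ ≤ ρ}).toReal ≤ csep * ρ ^ β)
    (a : ℝ → ℝ) (hanonneg : ∀ ρ, 0 ≤ a ρ) (hameas : Measurable a)
    (hdec : ∀ ρ > 0, a ρ ≤ cdec * ρ ^ (-α)) :
    Integrable (fun ω => (1/2) * Real.logb 2 (1 + 2 * a ‖T ω - R ω‖)) μ := by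
  set X : Ω → ℝ := fun ω => ‖T ω - R ω‖ with hXdef
  have hXmeas : Measurable X := (hT.sub hR).norm
  have hXnn : ∀ ω, 0 ≤ X ω := fun ω => norm_nonneg _
  -- X = 0 is a null set
  have hnull : μ {ω | X ω = 0} = 0 := by
    have htr : (μ {ω | X ω = 0}).toReal ≤ 0 := by
      apply le_of_forall_pos_le_add
      intro ε hε
      rw [zero_add]
      set ρ : ℝ := (ε / csep) ^ (1/β) with hρdef
      have hρ : 0 < ρ := Real.rpow_pos_of_pos (div_pos hε hcsep) _
      have hmono : μ {ω | X ω = 0} ≤ μ {ω | X ω ≤ ρ} := by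
        apply measure_mono
        intro ω hω
        simp only [Set.mem_setOf_eq] at hω ⊢
        rw [hω]; exact hρ.le
      calc (μ {ω | X ω = 0}).toReal ≤ (μ {ω | X ω ≤ ρ}).toReal :=
            ENNReal.toReal_mono (measure_ne_top _ _) hmono
        _ ≤ csep * ρ ^ β := hsep ρ hρ
        _ = ε := by
            rw [hρdef, ← Real.rpow_mul (div_pos hε hcsep).le, one_div,
              inv_mul_cancel₀ hβ.ne', Real.rpow_one, mul_div_cancel₀ _ hcsep.ne']
    have := ENNReal.toReal_nonneg (a := μ {ω | X ω = 0})
    have h0 : (μ {ω | X ω = 0}).toReal = 0 := le_antisymm htr this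
    exact (ENNReal.toReal_eq_zero_iff _).mp h0 |>.resolve_right (measure_ne_top _ _)
  -- Y = max 0 (- log X)
  set Y : Ω → ℝ := fun ω => max 0 (-Real.log (X ω)) with hYdef
  have hYmeas : Measurable Y := measurable_const.max (Real.measurable_log.comp hXmeas).neg
  have hYnn : ∀ ω, 0 ≤ Y ω := fun ω => le_max_left _ _
  -- Integrability of Y via layer cake
  have hYint : Integrable Y μ := by
    refine ⟨hYmeas.aestronglyMeasurable, ?_⟩
    rw [hasFiniteIntegral_iff_ofReal (Filter.Eventually.of_forall hYnn)]
    rw [lintegral_eq_lintegral_meas_lt μ (Filter.Eventually.of_forall hYnn)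
      hYmeas.aemeasurable]
    have hbound : ∀ t ∈ Set.Ioi (0:ℝ),
        μ {ω | t < Y ω} ≤ ENNReal.ofReal (csep * Real.exp (-β * t)) := by
      intro t ht
      have ht : 0 < t := ht
      have hsub : {ω | t < Y ω} ⊆ {ω | X ω ≤ Real.exp (-t)} := by
        intro ω hω
        have hω' : t < max 0 (-Real.log (X ω)) := hω
        rcases lt_max_iff.mp hω' with h | h
        · linarith
        · have hlog : Real.log (X ω) < -t := by linarith
          show X ω ≤ Real.exp (-t)
          rcases eq_or_lt_of_le (hXnn ω) with h0 | h0
          · rw [← h0]; exact (Real.exp_pos _).le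
          · exact ((Real.log_lt_iff_lt_exp h0).mp hlog).le
      have h1 : (μ {ω | t < Y ω}).toReal ≤ csep * Real.exp (-β * t) := by
        calc (μ {ω | t < Y ω}).toReal ≤ (μ {ω | X ω ≤ Real.exp (-t)}).toReal :=
              ENNReal.toReal_mono (measure_ne_top _ _) (measure_mono hsub)
          _ ≤ csep * (Real.exp (-t)) ^ β := hsep _ (Real.exp_pos _)
          _ = csep * Real.exp (-β * t) := by
              rw [← Real.exp_log (x := (Real.exp (-t)) ^ β)
                  (Real.rpow_pos_of_pos (Real.exp_pos _) _),
                Real.log_rpow (Real.exp_pos _), Real.log_exp]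
              ring_nf
      calc μ {ω | t < Y ω} = ENNReal.ofReal ((μ {ω | t < Y ω}).toReal) := by
            rw [ENNReal.ofReal_toReal (measure_ne_top _ _)]
        _ ≤ ENNReal.ofReal (csep * Real.exp (-β * t)) := ENNReal.ofReal_le_ofReal h1
    calc ∫⁻ t in Set.Ioi (0:ℝ), μ {ω | t < Y ω}
        ≤ ∫⁻ t in Set.Ioi (0:ℝ), ENNReal.ofReal (csep * Real.exp (-β * t)) :=
          setLIntegral_mono' measurableSet_Ioi hbound
      _ < ⊤ := by
          have hint : IntegrableOn (fun t => csep * Real.exp (-β * t)) (Set.Ioi (0:ℝ)) :=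
            (exp_neg_integrableOn_Ioi 0 hβ).const_mul csep
          rw [← ofReal_integral_eq_lintegral_ofReal hint
            (Filter.Eventually.of_forall fun t =>
              mul_nonneg hcsep.le (Real.exp_pos _).le)]
          exact ENNReal.ofReal_lt_top
  -- the dominating function
  have hlog2 : (0:ℝ) < Real.log 2 := Real.log_pos one_lt_two
  set C1 : ℝ := (1/2) * (Real.log (1 + 2 * cdec) / Real.log 2) with hC1
  set C3 : ℝ := α / (2 * Real.log 2) with hC3
  have hgint : Integrable (fun ω => C1 + C3 * Y ω) μ :=
    (integrable_const C1).add (hYint.const_mul C3)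
  refine Integrable.mono' hgint ?_ ?_
  · apply Measurable.aestronglyMeasurable
    have : Measurable fun x : ℝ => Real.logb 2 x := Real.measurable_log.div_const _
    exact (measurable_const.mul (this.comp
      (measurable_const.add (measurable_const.mul (hameas.comp hXmeas)))))
  · -- a.e. bound
    have hae : ∀ᵐ ω ∂μ, X ω ≠ 0 := by
      rw [Filter.eventually_iff, mem_ae_iff]
      simpa [Set.compl_setOf] using hnull
    filter_upwards [hae] with ω hω
    have hXpos : 0 < X ω := lt_of_le_of_ne (hXnn ω) (Ne.symm hω)
    have harg1 : (1:ℝ) ≤ 1 + 2 * a (X ω) := by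
      have := hanonneg (X ω); linarith
    have hFnn : 0 ≤ (1/2) * Real.logb 2 (1 + 2 * a (X ω)) :=
      mul_nonneg (by norm_num) (Real.logb_nonneg one_lt_two harg1)
    rw [Real.norm_of_nonneg hFnn]
    -- key log bound
    have hkey : Real.log (1 + 2 * a (X ω)) ≤ Real.log (1 + 2 * cdec) + α * Y ω := by
      have hdecX := hdec (X ω) hXpos
      rcases le_or_gt 1 (X ω) with h1 | h1
      · have hpow : (X ω) ^ (-α) ≤ 1 := Real.rpow_le_one_of_one_le_of_nonpos h1 (by linarith)
        have : 1 + 2 * a (X ω) ≤ 1 + 2 * cdec := by nlinarith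
        have hle := Real.log_le_log (by linarith) this
        have : 0 ≤ α * Y ω := mul_nonneg hα.le (hYnn ω)
        linarith
      · have hpow : (1:ℝ) ≤ (X ω) ^ (-α) :=
          Real.one_le_rpow_of_pos_of_le_one_of_nonpos hXpos h1.le (by linarith)
        have hlogneg : Real.log (X ω) < 0 := Real.log_neg hXpos h1
        have hYeq : Y ω = -Real.log (X ω) := max_eq_right (by linarith)
        have hXpow : 0 < (X ω) ^ (-α) := Real.rpow_pos_of_pos hXpos _
        have hstep : 1 + 2 * a (X ω) ≤ (1 + 2 * cdec) * (X ω) ^ (-α) := by nlinarith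
        have hle := Real.log_le_log (by linarith) hstep
        rw [Real.log_mul (by positivity) (by positivity),
          Real.log_rpow hXpos] at hle
        rw [hYeq]
        linarith
    -- conclude
    rw [Real.logb]
    have h2 : Real.log (1 + 2 * a (X ω)) / Real.log 2
        ≤ (Real.log (1 + 2 * cdec) + α * Y ω) / Real.log 2 := by
      gcongr
    calc (1/2) * (Real.log (1 + 2 * a (X ω)) / Real.log 2)
        ≤ (1/2) * ((Real.log (1 + 2 * cdec) + α * Y ω) / Real.log 2) := by linarith
      _ = C1 + C3 * Y ω := by rw [hC1, hC3]; field_simp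
end

section
/- Let (T_i)_{i=1}^n and (R_i)_{i=1}^n be two independent i.i.d. families of random points in ℝ^d, and for i ≠ j define B_{ij} as the indicator of the event {S_ii ≤ t} ∩ {S_ij ≤ t} ∩ {S_jj ≤ S_ji}, where S_ij = f(‖T_i − R_j‖) for a fixed measurable function f. Then P(B_{ij} = 1) ≥ (1/2)·P({S_ii ≤ t} ∩ {S_ij ≤ t}). -/
open MeasureTheory ProbabilityTheory

theorem stmt_9 {Ω : Type*} [MeasurableSpace Ω] (μ : Measure Ω) [IsProbabilityMeasure μ]
    (d n : ℕ) (T R : Fin n → Ω → EuclideanSpace ℝ (Fin d))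
    (hTmeas : ∀ i, Measurable (T i)) (hRmeas : ∀ i, Measurable (R i))
    (hindep : iIndepFun
      (fun k : Fin n ⊕ Fin n => Sum.elim T R k) μ)
    (hTident : ∀ i j, IdentDistrib (T i) (T j) μ μ)
    (hRident : ∀ i j, IdentDistrib (R i) (R j) μ μ)
    (f : ℝ → ℝ) (hf : Measurable f)
    (S : Fin n → Fin n → Ω → ℝ) (hS : ∀ k l ω, S k l ω = f ‖T k ω - R l ω‖)
    (i j : Fin n) (hij : i ≠ j) (t : ℝ) :
    μ {ω | S i i ω ≤ t ∧ S i j ω ≤ t ∧ S j j ω ≤ S j i ω} ≥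
      2⁻¹ * μ {ω | S i i ω ≤ t ∧ S i j ω ≤ t} := by
  classical
  have hmeas : ∀ k : Fin n ⊕ Fin n, Measurable (Sum.elim T R k) := by
    rintro (k | k)
    · exact hTmeas k
    · exact hRmeas k
  -- pairs
  set P : Ω → EuclideanSpace ℝ (Fin d) × EuclideanSpace ℝ (Fin d) := fun ω => (T i ω, T j ω) with hP
  set Q : Ω → EuclideanSpace ℝ (Fin d) × EuclideanSpace ℝ (Fin d) := fun ω => (R i ω, R j ω) with hQ
  set Q' : Ω → EuclideanSpace ℝ (Fin d) × EuclideanSpace ℝ (Fin d) := fun ω => (R j ω, R i ω) with hQ'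
  have hPm : Measurable P := (hTmeas i).prodMk (hTmeas j)
  have hQm : Measurable Q := (hRmeas i).prodMk (hRmeas j)
  have hQ'm : Measurable Q' := (hRmeas j).prodMk (hRmeas i)
  have hPQ : IndepFun P Q μ := by
    have := hindep.indepFun_prodMk_prodMk hmeas (Sum.inl i) (Sum.inl j)
      (Sum.inr i) (Sum.inr j) (by simp) (by simp) (by simp) (by simp)
    simpa using this
  have hPQ' : IndepFun P Q' μ := by
    have := hindep.indepFun_prodMk_prodMk hmeas (Sum.inl i) (Sum.inl j)
      (Sum.inr j) (Sum.inr i) (by simp) (by simp) (by simp) (by simp)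
    simpa using this
  have hRij : IndepFun (R i) (R j) μ := by
    have := hindep.indepFun (i := Sum.inr i) (j := Sum.inr j) (by simp [hij])
    simpa using this
  have hRji : IndepFun (R j) (R i) μ := hRij.symm
  -- laws of Q and Q' agree
  have hQQ' : μ.map Q = μ.map Q' := by
    rw [(indepFun_iff_map_prod_eq_prod_map_map (hRmeas i).aemeasurable
        (hRmeas j).aemeasurable).mp hRij,
      (indepFun_iff_map_prod_eq_prod_map_map (hRmeas j).aemeasurable
        (hRmeas i).aemeasurable).mp hRji,
      (hRident i j).map_eq]
  have hmapEq : μ.map (fun ω => (P ω, Q ω)) = μ.map (fun ω => (P ω, Q' ω)) := by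
    rw [(indepFun_iff_map_prod_eq_prod_map_map hPm.aemeasurable hQm.aemeasurable).mp hPQ,
      (indepFun_iff_map_prod_eq_prod_map_map hPm.aemeasurable hQ'm.aemeasurable).mp hPQ',
      hQQ']
  -- the set C
  set C : Set ((EuclideanSpace ℝ (Fin d) × EuclideanSpace ℝ (Fin d)) × (EuclideanSpace ℝ (Fin d) × EuclideanSpace ℝ (Fin d))) :=
    {x | f ‖x.1.1 - x.2.1‖ ≤ t ∧ f ‖x.1.1 - x.2.2‖ ≤ t ∧ f ‖x.1.2 - x.2.2‖ ≤ f ‖x.1.2 - x.2.1‖}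
    with hC
  have hcomp : ∀ (a b : ((EuclideanSpace ℝ (Fin d) × EuclideanSpace ℝ (Fin d)) × (EuclideanSpace ℝ (Fin d) × EuclideanSpace ℝ (Fin d))) → EuclideanSpace ℝ (Fin d)),
      Measurable a → Measurable b → Measurable (fun x => f ‖a x - b x‖) := fun a b ha hb =>
    hf.comp ((ha.sub hb).norm)
  have hCm : MeasurableSet C := by
    refine MeasurableSet.inter ?_ (MeasurableSet.inter ?_ ?_)
    · exact measurableSet_le (hcomp _ _ (measurable_fst.comp measurable_fst)
        (measurable_fst.comp measurable_snd)) measurable_const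
    · exact measurableSet_le (hcomp _ _ (measurable_fst.comp measurable_fst)
        (measurable_snd.comp measurable_snd)) measurable_const
    · exact measurableSet_le (hcomp _ _ (measurable_snd.comp measurable_fst)
        (measurable_snd.comp measurable_snd))
        (hcomp _ _ (measurable_snd.comp measurable_fst)
        (measurable_fst.comp measurable_snd))
  have key : μ ((fun ω => (P ω, Q ω)) ⁻¹' C) = μ ((fun ω => (P ω, Q' ω)) ⁻¹' C) := by
    rw [← Measure.map_apply (hPm.prodMk hQm) hCm, ← Measure.map_apply (hPm.prodMk hQ'm) hCm,
      hmapEq]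
  have hE1 : (fun ω => (P ω, Q ω)) ⁻¹' C
      = {ω | S i i ω ≤ t ∧ S i j ω ≤ t ∧ S j j ω ≤ S j i ω} := by
    ext ω; simp [hC, hP, hQ, Set.mem_setOf_eq, hS]
  have hE2 : (fun ω => (P ω, Q' ω)) ⁻¹' C
      = {ω | S i j ω ≤ t ∧ S i i ω ≤ t ∧ S j i ω ≤ S j j ω} := by
    ext ω; simp [hC, hP, hQ', Set.mem_setOf_eq, hS]
  set E1 := {ω | S i i ω ≤ t ∧ S i j ω ≤ t ∧ S j j ω ≤ S j i ω}
  set E2 := {ω | S i j ω ≤ t ∧ S i i ω ≤ t ∧ S j i ω ≤ S j j ω}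
  have hkey : μ E1 = μ E2 := by rw [← hE1, ← hE2, key]
  have hsub : {ω | S i i ω ≤ t ∧ S i j ω ≤ t} ⊆ E1 ∪ E2 := by
    intro ω hω
    rcases le_total (S j j ω) (S j i ω) with h | h
    · exact Or.inl ⟨hω.1, hω.2, h⟩
    · exact Or.inr ⟨hω.2, hω.1, h⟩
  have hA : μ {ω | S i i ω ≤ t ∧ S i j ω ≤ t} ≤ 2 * μ E1 := by
    calc μ {ω | S i i ω ≤ t ∧ S i j ω ≤ t} ≤ μ (E1 ∪ E2) := measure_mono hsub
      _ ≤ μ E1 + μ E2 := measure_union_le _ _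
      _ = 2 * μ E1 := by rw [← hkey, two_mul]
  calc (2 : ENNReal)⁻¹ * μ {ω | S i i ω ≤ t ∧ S i j ω ≤ t}
      ≤ 2⁻¹ * (2 * μ E1) := mul_le_mul_right hA _
    _ = μ E1 := by rw [← mul_assoc, ENNReal.inv_mul_cancel (by norm_num) (by norm_num), one_mul]
end

section
/- Let T_i, T_j, R_i, R_j be independent random points in ℝ^d with T_i, T_j identically distributed and R_i, R_j identically distributed, and let f : ℝ_{≥0} → ℝ be measurable with S_{kl} = f(‖T_k − R_l‖). If t is such that P(S_ii ≤ t) > 0, then P({S_ii ≤ t} ∩ {S_ij ≤ t}) > 0. -/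
open MeasureTheory ProbabilityTheory

theorem stmt_10 {Ω : Type*} [MeasurableSpace Ω] (μ : Measure Ω) [IsProbabilityMeasure μ]
    (d : ℕ) (Ti Tj Ri Rj : Ω → EuclideanSpace ℝ (Fin d))
    (hmeas : ∀ k, Measurable (![Ti, Tj, Ri, Rj] k))
    (hindep : iIndepFun ![Ti, Tj, Ri, Rj] μ)
    (hTident : IdentDistrib Ti Tj μ μ)
    (hRident : IdentDistrib Ri Rj μ μ)
    (f : ℝ → ℝ) (hf : Measurable f)
    (t : ℝ)
    (hpos : 0 < μ {ω | f ‖Ti ω - Ri ω‖ ≤ t}) :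
    0 < μ {ω | f ‖Ti ω - Ri ω‖ ≤ t ∧ f ‖Ti ω - Rj ω‖ ≤ t} := by

  have hTi : Measurable Ti := by simpa using hmeas 0
  have hRi : Measurable Ri := by simpa using hmeas 2
  have hRj : Measurable Rj := by simpa using hmeas 3
  set ν := μ.map Ti with hν
  set ρ := μ.map Ri with hρ
  haveI : IsProbabilityMeasure ν := Measure.isProbabilityMeasure_map hTi.aemeasurable
  haveI : IsProbabilityMeasure ρ := Measure.isProbabilityMeasure_map hRi.aemeasurable
  have hρj : μ.map Rj = ρ := hRident.map_eq.symm
  set s : Set (EuclideanSpace ℝ (Fin d) × EuclideanSpace ℝ (Fin d)) := {p | f ‖p.1 - p.2‖ ≤ t} with hs_def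
  have hs : MeasurableSet s :=
    (hf.comp ((measurable_fst.sub measurable_snd).norm)) measurableSet_Iic
  set g : EuclideanSpace ℝ (Fin d) → ENNReal := fun a => ρ (Prod.mk a ⁻¹' s) with hg_def
  have hgm : Measurable g := measurable_measure_prodMk_left hs
  -- Step 1: μ {S_ii ≤ t} = ∫ g dν
  have hIndep1 : IndepFun Ti Ri μ := hindep.indepFun (show (0 : Fin 4) ≠ 2 by decide)
  have map1 : μ.map (fun ω => (Ti ω, Ri ω)) = ν.prod ρ :=
    (indepFun_iff_map_prod_eq_prod_map_map hTi.aemeasurable hRi.aemeasurable).mp hIndep1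
  have e1 : μ {ω | f ‖Ti ω - Ri ω‖ ≤ t} = ∫⁻ a, g a ∂ν := by
    have h1 : μ {ω | f ‖Ti ω - Ri ω‖ ≤ t} = μ.map (fun ω => (Ti ω, Ri ω)) s := by
      rw [Measure.map_apply (hTi.prodMk hRi) hs]
      rfl
    rw [h1, map1, Measure.prod_apply hs]
  -- Step 2: μ {both} = ∫ g(a)^2 dν
  have hIndepP : IndepFun (fun ω => (Ri ω, Rj ω)) Ti μ :=
    hindep.indepFun_prodMk hmeas 2 3 0 (by decide) (by decide)
  have hIndepRR : IndepFun Ri Rj μ := hindep.indepFun (show (2 : Fin 4) ≠ 3 by decide)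
  have mapRR : μ.map (fun ω => (Ri ω, Rj ω)) = ρ.prod ρ := by
    rw [(indepFun_iff_map_prod_eq_prod_map_map hRi.aemeasurable hRj.aemeasurable).mp hIndepRR,
      hρj]
  have map2 : μ.map (fun ω => (Ti ω, (Ri ω, Rj ω))) = ν.prod (ρ.prod ρ) := by
    rw [(indepFun_iff_map_prod_eq_prod_map_map hTi.aemeasurable
      ((hRi.prodMk hRj).aemeasurable)).mp hIndepP.symm, mapRR]
  set S : Set (EuclideanSpace ℝ (Fin d) × EuclideanSpace ℝ (Fin d) × EuclideanSpace ℝ (Fin d)) := {p | f ‖p.1 - p.2.1‖ ≤ t ∧ f ‖p.1 - p.2.2‖ ≤ t} with hS_def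
  have hS : MeasurableSet S :=
    ((hf.comp ((measurable_fst.sub (measurable_fst.comp measurable_snd)).norm))
        measurableSet_Iic).inter
      ((hf.comp ((measurable_fst.sub (measurable_snd.comp measurable_snd)).norm))
        measurableSet_Iic)
  have e2 : μ {ω | f ‖Ti ω - Ri ω‖ ≤ t ∧ f ‖Ti ω - Rj ω‖ ≤ t} = ∫⁻ a, g a * g a ∂ν := by
    have h1 : μ {ω | f ‖Ti ω - Ri ω‖ ≤ t ∧ f ‖Ti ω - Rj ω‖ ≤ t}
        = μ.map (fun ω => (Ti ω, (Ri ω, Rj ω))) S := by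
      rw [Measure.map_apply (hTi.prodMk (hRi.prodMk hRj)) hS]
      rfl
    rw [h1, map2, Measure.prod_apply hS]
    refine lintegral_congr fun a => ?_
    have hsec : Prod.mk a ⁻¹' S = (Prod.mk a ⁻¹' s) ×ˢ (Prod.mk a ⁻¹' s) := rfl
    rw [hsec, Measure.prod_prod]
  rw [e2]
  rw [e1] at hpos
  rw [lintegral_pos_iff_support hgm] at hpos
  rw [lintegral_pos_iff_support (f := fun a => g a * g a) (hgm.mul hgm)]
  have hsup : (Function.support fun a => g a * g a) = Function.support g := by
    ext a
    simp [Function.mem_support, mul_eq_zero]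
  rw [hsup]
  exact hpos
end
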